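/- Let λ₁, λ_p be real numbers with 0 < λ₁ < λ_p, set a₁ := 1 + (m/b)·λ₁ and a_p := 1 + (m/b)·λ_p, and define w_p* := 2 / ( p + √( (p−2)² + 4·(p−1)·a_p/a₁ ) ) and w₁* := (1 − w_p*)/(p−1). Then the following identity holds: ( (p−1)·w₁*·λ₁ + w_p*·λ_p )·w_p* − w₁*·λ₁ + (b/m)·(1 − p·w₁*) = 0. -/

import Mathlib

open Real

/-- The identity satisfied by the D-optimal weights of the Poisson-Gamma model:
`(( p−1)·w₁*·λ₁ + w_p*·λ_p)·w_p* − w₁*·λ₁ + (b/m)·(1 − p·w₁*) = 0`. -/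
theorem D_optimal_weights_identity
    (b m : ℝ) (hb : 0 < b) (hm : 0 < m)
    (p : ℕ) (hp : 2 ≤ p)
    (l1 lp : ℝ) (hl1 : 0 < l1) (hlp : l1 < lp)
    (a1 ap wp w1 : ℝ)
    (ha1 : a1 = 1 + (m / b) * l1) (hap : ap = 1 + (m / b) * lp)
    (hwp : wp = 2 / ((p : ℝ) + Real.sqrt (((p : ℝ) - 2) ^ 2 +
      4 * ((p : ℝ) - 1) * (ap / a1))))
    (hw1 : w1 = (1 - wp) / ((p : ℝ) - 1)) :
    (((p : ℝ) - 1) * w1 * l1 + wp * lp) * wp - w1 * l1 + (b / m) * (1 - (p : ℝ) * w1) = 0 := by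
  have hpR : (2 : ℝ) ≤ (p : ℝ) := by exact_mod_cast hp
  have hmb : 0 < m / b := div_pos hm hb
  have ha1pos : 0 < a1 := by rw [ha1]; positivity
  have hlp0 : 0 < lp := lt_trans hl1 hlp
  have hR : 0 ≤ ap / a1 := by
    apply div_nonneg _ ha1pos.le
    rw [hap]; positivity
  set D : ℝ := ((p : ℝ) - 2) ^ 2 + 4 * ((p : ℝ) - 1) * (ap / a1) with hD
  have hDnn : 0 ≤ D := by
    have h1 : 0 ≤ 4 * ((p : ℝ) - 1) * (ap / a1) :=
      mul_nonneg (by nlinarith) hR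
    have h2 : 0 ≤ ((p : ℝ) - 2) ^ 2 := sq_nonneg _
    rw [hD]; linarith
  set s : ℝ := Real.sqrt D with hs
  have hsnn : 0 ≤ s := Real.sqrt_nonneg _
  have hs2 : s ^ 2 = D := Real.sq_sqrt hDnn
  have hps : (0 : ℝ) < (p : ℝ) + s := by linarith
  have hwp' : wp * ((p : ℝ) + s) = 2 := by
    rw [hwp]; field_simp
  have hsw : wp * s = 2 - (p : ℝ) * wp := by nlinarith [hwp']
  have hDsq : D * wp ^ 2 = (2 - (p : ℝ) * wp) ^ 2 := by
    rw [← hs2]; linear_combination (wp * s + 2 - (p:ℝ) * wp) * hsw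
  have ha1ne : a1 ≠ 0 := ne_of_gt ha1pos
  have hkey : a1 * (1 - (p : ℝ) * wp) = ((p : ℝ) - 1) * (ap - a1) * wp ^ 2 := by
    have hap1 : a1 * (ap / a1) = ap := by field_simp
    have h := hDsq
    rw [hD] at h
    linear_combination (-(a1/4)) * h + ((p:ℝ)-1) * wp^2 * hap1
  have hbm : (0 : ℝ) < b / m := div_pos hb hm
  have hmne : m ≠ 0 := ne_of_gt hm
  have hbne : b ≠ 0 := ne_of_gt hb
  have hl1' : l1 = (b / m) * (a1 - 1) := by rw [ha1]; field_simp; ring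
  have hlp' : lp = (b / m) * (ap - 1) := by rw [hap]; field_simp; ring
  have hp1 : (p : ℝ) - 1 ≠ 0 := ne_of_gt (by linarith : (0:ℝ) < (p:ℝ) - 1)
  rw [hl1', hlp', hw1]
  field_simp
  linear_combination (-b) * hkey
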